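/- Let k ∈ [0,1), λ > 0 and s ≥ 1. If y₁ : [s,∞) → ℝ is twice continuously differentiable with y₁''(t) = λ² t^{−2k} y₁(t) for all t ≥ s, y₁(s) = 0 and y₁'(s) = 1, then y₁(t) ≥ (st)^{k/2} sinh(λ(φ_k(t) − φ_k(s)))/λ for all t ≥ s. -/

import Mathlib

open MeasureTheory Real Set

/-- `φ_k(t) = t^(1-k)/(1-k)`. -/
noncomputable def phik (k t : ℝ) : ℝ := t ^ (1 - k) / (1 - k)

/-- `A_k(t) = φ_k(t) - φ_k(1)`. -/
noncomputable def Ak (k t : ℝ) : ℝ := phik k t - phik k 1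

private lemma mono_aux {f f' : ℝ → ℝ} {a b : ℝ}
    (h : ∀ t ∈ Icc a b, HasDerivAt f (f' t) t)
    (h0 : ∀ t ∈ Icc a b, 0 ≤ f' t) : MonotoneOn f (Icc a b) := by
  apply monotoneOn_of_deriv_nonneg (convex_Icc a b)
  · exact fun t ht => (h t ht).continuousAt.continuousWithinAt
  · intro t ht
    rw [interior_Icc] at ht
    exact (h t ⟨ht.1.le, ht.2.le⟩).differentiableAt.differentiableWithinAt
  · intro t ht
    rw [interior_Icc] at ht
    rw [(h t ⟨ht.1.le, ht.2.le⟩).deriv]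
    exact h0 t ⟨ht.1.le, ht.2.le⟩

private lemma compA {s Q : ℝ} (hQ : 0 ≤ Q) {v v' v'' q : ℝ → ℝ}
    (hq0 : ∀ t, s ≤ t → 0 ≤ q t) (hqQ : ∀ t, s ≤ t → q t ≤ Q)
    (hv : ∀ t, s ≤ t → HasDerivAt v (v' t) t)
    (hv' : ∀ t, s ≤ t → HasDerivAt v' (v'' t) t)
    (hineq : ∀ t, s ≤ t → q t * v t ≤ v'' t)
    (h0 : v s = 0) (h1 : v' s = 0) :
    ∀ t, s ≤ t → 0 ≤ v t := by
  set δ : ℝ := 1 / (Q + 1) with hδdef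
  have hQ1 : 0 < Q + 1 := by linarith
  have hδ : 0 < δ := by positivity
  have hδQ : δ * (Q + 1) = 1 := by rw [hδdef]; field_simp
  have key : ∀ n : ℕ, ∀ t, s ≤ t → t ≤ s + n * δ → 0 ≤ v t := by
    intro n
    induction n with
    | zero =>
      intro t ht1 ht2
      have : t = s := by push_cast at ht2; linarith
      rw [this, h0]
    | succ n ih =>
      intro t ht1 ht2
      set a : ℝ := s + n * δ with ha
      have hsa : s ≤ a := by
        have : (0:ℝ) ≤ n * δ := by positivity
        linarith
      rcases le_or_gt t a with hta | hta
      · exact ih t ht1 hta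
      have hta' : t ≤ a + δ := by push_cast at ht2; linarith
      -- v ≥ 0 on [s, a]
      have hvnn : ∀ u ∈ Icc s a, 0 ≤ v u := fun u hu => ih u hu.1 hu.2
      -- v' ≥ 0 on [s, a]
      have hv'nn : ∀ u ∈ Icc s a, 0 ≤ v' u := by
        intro u hu
        have hm : MonotoneOn v' (Icc s a) := by
          apply mono_aux (fun r hr => hv' r hr.1)
          intro r hr
          have := hineq r hr.1
          have h2 := mul_nonneg (hq0 r hr.1) (hvnn r hr)
          linarith
        have := hm (left_mem_Icc.2 hsa) hu hu.1
        linarith [h1]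
      have hva : 0 ≤ v a := hvnn a (right_mem_Icc.2 hsa)
      have hv'a : 0 ≤ v' a := hv'nn a (right_mem_Icc.2 hsa)
      -- min of v on [a, a+δ]
      have hKne : (Icc a (a + δ)).Nonempty := ⟨a, left_mem_Icc.2 (by linarith)⟩
      have hcont : ContinuousOn v (Icc a (a + δ)) := fun r hr =>
        (hv r (hsa.trans hr.1)).continuousAt.continuousWithinAt
      obtain ⟨ts, hts, htsmin⟩ := isCompact_Icc.exists_isMinOn hKne hcont
      have hmin : ∀ u ∈ Icc a (a + δ), v ts ≤ v u := fun u hu => htsmin hu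
      suffices hts0 : 0 ≤ v ts by
        have := hmin t ⟨hta.le, hta'⟩; linarith
      by_contra hneg
      push_neg at hneg
      set M : ℝ := -v ts with hM
      have hMpos : 0 < M := by simp [hM]; linarith
      -- w = v + Q*M/2*(τ-a)^2
      set w : ℝ → ℝ := fun τ => v τ + Q * M / 2 * (τ - a) ^ 2 with hw
      set w' : ℝ → ℝ := fun τ => v' τ + Q * M * (τ - a) with hw'
      have hwd : ∀ u ∈ Icc a (a + δ), HasDerivAt w (w' u) u := by
        intro u hu
        have hp : HasDerivAt (fun τ : ℝ => Q * M / 2 * (τ - a) ^ 2) (Q * M * (u - a)) u := by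
          have := (((hasDerivAt_id u).sub_const a).pow 2).const_mul (Q * M / 2)
          refine this.congr_deriv ?_
          symm
          simp only [id_eq]
          push_cast; ring
        exact (hv u (hsa.trans hu.1)).add hp
      have hw'd : ∀ u ∈ Icc a (a + δ), HasDerivAt w' (v'' u + Q * M) u := by
        intro u hu
        have hp : HasDerivAt (fun τ : ℝ => Q * M * (τ - a)) (Q * M) u := by
          have := ((hasDerivAt_id u).sub_const a).const_mul (Q * M)
          refine this.congr_deriv ?_
          symm; ring
        exact (hv' u (hsa.trans hu.1)).add hp
      have hw''nn : ∀ u ∈ Icc a (a + δ), 0 ≤ v'' u + Q * M := by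
        intro u hu
        have h2 := hineq u (hsa.trans hu.1)
        have h3 : v ts ≤ v u := hmin u hu
        have h4 : q u * v ts ≤ q u * v u := mul_le_mul_of_nonneg_left h3 (hq0 u (hsa.trans hu.1))
        have h5 : Q * v ts ≤ q u * v ts := by
          apply mul_le_mul_of_nonpos_right (hqQ u (hsa.trans hu.1)); linarith
        have : Q * v ts = -(Q * M) := by rw [hM]; ring
        linarith
      have hw'nn : ∀ u ∈ Icc a (a + δ), 0 ≤ w' u := by
        intro u hu
        have hm : MonotoneOn w' (Icc a (a + δ)) := mono_aux hw'd hw''nn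
        have := hm (left_mem_Icc.2 (by linarith)) hu hu.1
        have hwa : w' a = v' a := by simp [hw']
        rw [hwa] at this; linarith
      have hmw : MonotoneOn w (Icc a (a + δ)) := mono_aux hwd hw'nn
      have hwa : w a ≤ w ts := hmw (left_mem_Icc.2 (by linarith)) hts hts.1
      have hwav : w a = v a := by simp [hw]
      have hwts : w ts = v ts + Q * M / 2 * (ts - a) ^ 2 := rfl
      have hts2 : (ts - a) ^ 2 ≤ δ ^ 2 := by
        apply sq_le_sq'
        · linarith [hts.1]
        · linarith [hts.2]
      have hQM : Q * M / 2 * (ts - a) ^ 2 ≤ Q * M / 2 * δ ^ 2 :=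
        mul_le_mul_of_nonneg_left hts2 (by positivity)
      have hfin : 0 ≤ -M + Q * M / 2 * δ ^ 2 := by
        rw [hwav, hwts] at hwa
        have : v ts = -M := by rw [hM]; ring
        linarith
      have h7 : 0 ≤ (-M + Q * M / 2 * δ ^ 2) * (Q + 1) ^ 2 := mul_nonneg hfin (sq_nonneg _)
      have h8 : (-M + Q * M / 2 * δ ^ 2) * (Q + 1) ^ 2 = -M * (Q + 1) ^ 2 + Q * M / 2 := by
        linear_combination (Q * M / 2 * (δ * (Q + 1) + 1)) * hδQ
      nlinarith [mul_nonneg hMpos.le (sq_nonneg Q), mul_nonneg hMpos.le hQ]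
  intro t ht
  obtain ⟨n, hn⟩ := exists_nat_ge ((t - s) / δ)
  apply key n t ht
  have := (div_le_iff₀ hδ).mp hn
  linarith

private lemma hasDerivAt_phik {k t : ℝ} (hk1 : k < 1) (ht : 0 < t) :
    HasDerivAt (phik k) (t ^ (-k)) t := by
  have h := (Real.hasDerivAt_rpow_const (x := t) (p := 1 - k) (Or.inl ht.ne')).div_const (1 - k)
  have hne : 1 - k ≠ 0 := by linarith
  have he : (1 - k) * t ^ (1 - k - 1) / (1 - k) = t ^ (-k) := by
    rw [show (1:ℝ) - k - 1 = -k by ring]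
    field_simp
  rw [he] at h
  exact h

private lemma hG {k lam c t : ℝ} (hk1 : k < 1) (ht : 0 < t) :
    HasDerivAt (fun τ => τ ^ (k/2) * Real.sinh (lam * (phik k τ - c)))
      (k/2 * t ^ (k/2 - 1) * Real.sinh (lam * (phik k t - c))
        + lam * t ^ (-(k/2)) * Real.cosh (lam * (phik k t - c))) t := by
  have h1 : HasDerivAt (fun τ : ℝ => τ ^ (k/2)) (k/2 * t ^ (k/2 - 1)) t :=
    Real.hasDerivAt_rpow_const (Or.inl ht.ne')
  have h2 : HasDerivAt (fun τ => lam * (phik k τ - c)) (lam * t ^ (-k)) t :=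
    ((hasDerivAt_phik hk1 ht).sub_const c).const_mul lam
  have h3 := h2.sinh
  have h := h1.mul h3
  refine h.congr_deriv ?_
  symm
  have hA : t ^ (k/2) * t ^ (-k) = t ^ (-(k/2)) := by
    rw [← Real.rpow_add ht]; ring_nf
  linear_combination (-(lam * Real.cosh (lam * (phik k t - c)))) * hA

private lemma hG1 {k lam c t : ℝ} (hk1 : k < 1) (ht : 0 < t) :
    HasDerivAt (fun τ => k/2 * τ ^ (k/2 - 1) * Real.sinh (lam * (phik k τ - c))
        + lam * τ ^ (-(k/2)) * Real.cosh (lam * (phik k τ - c)))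
      (lam^2 * t ^ (-(2*k)) * (t ^ (k/2) * Real.sinh (lam * (phik k t - c)))
        + k/2 * (k/2 - 1) * t ^ (k/2 - 2) * Real.sinh (lam * (phik k t - c))) t := by
  have h2 : HasDerivAt (fun τ => lam * (phik k τ - c)) (lam * t ^ (-k)) t :=
    ((hasDerivAt_phik hk1 ht).sub_const c).const_mul lam
  have hS := h2.sinh
  have hC := h2.cosh
  have ha : HasDerivAt (fun τ : ℝ => τ ^ (k/2 - 1)) ((k/2 - 1) * t ^ (k/2 - 1 - 1)) t :=
    Real.hasDerivAt_rpow_const (Or.inl ht.ne')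
  have hb : HasDerivAt (fun τ : ℝ => τ ^ (-(k/2))) ((-(k/2)) * t ^ (-(k/2) - 1)) t :=
    Real.hasDerivAt_rpow_const (Or.inl ht.ne')
  have hterm1 := ((ha.const_mul (k/2)).mul hS)
  have hterm2 := ((hb.const_mul lam).mul hC)
  have h := hterm1.add hterm2
  refine h.congr_deriv ?_
  symm
  have hA : t ^ (k/2 - 1) * t ^ (-k) = t ^ (-(k/2) - 1) := by
    rw [← Real.rpow_add ht]; ring_nf
  have hB : t ^ (-(k/2)) * t ^ (-k) = t ^ (-(2*k)) * t ^ (k/2) := by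
    rw [← Real.rpow_add ht, ← Real.rpow_add ht]; ring_nf
  have hC2 : k/2 - 1 - 1 = k/2 - 2 := by ring
  rw [hC2]
  linear_combination (-(lam * (k/2) * Real.cosh (lam * (phik k t - c)))) * hA
    + (-(lam^2 * Real.sinh (lam * (phik k t - c)))) * hB

/-- Lower bound for the solution `y₁` of `y'' = λ² t^(-2k) y`, `y(s) = 0`, `y'(s) = 1`. -/
theorem y1_lower_bound
    (k : ℝ) (hk : k ∈ Set.Ico (0:ℝ) 1) (lam : ℝ) (hlam : 0 < lam)
    (s : ℝ) (hs : 1 ≤ s)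
    (y₁ : ℝ → ℝ)
    (hyd : ∀ t : ℝ, s ≤ t → DifferentiableAt ℝ y₁ t)
    (hyd2 : ∀ t : ℝ, s ≤ t → DifferentiableAt ℝ (deriv y₁) t)
    (hyc2 : ContinuousOn (deriv (deriv y₁)) (Set.Ici s))
    (hode : ∀ t : ℝ, s ≤ t → deriv (deriv y₁) t = lam^2 * t ^ (-(2*k)) * y₁ t)
    (hy0 : y₁ s = 0) (hy0' : deriv y₁ s = 1) :
    ∀ t : ℝ, s ≤ t →
      (s*t) ^ (k/2) * Real.sinh (lam * (phik k t - phik k s)) / lam ≤ y₁ t := by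
  obtain ⟨hk0, hk1⟩ := hk
  have hs0 : (0:ℝ) < s := lt_of_lt_of_le one_pos hs
  have hlamne : lam ≠ 0 := hlam.ne'
  -- shorthand
  set c : ℝ := phik k s with hc
  have hSnn : ∀ t, s ≤ t → 0 ≤ Real.sinh (lam * (phik k t - c)) := by
    intro t ht
    have ht0 : (0:ℝ) < t := lt_of_lt_of_le hs0 ht
    have h1k : (0:ℝ) < 1 - k := by linarith
    have hmono : phik k s ≤ phik k t := by
      unfold phik
      have := Real.rpow_le_rpow hs0.le ht (by linarith : (0:ℝ) ≤ 1 - k)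
      exact div_le_div_of_nonneg_right this h1k.le
    rw [Real.sinh_nonneg_iff]
    have : (0:ℝ) ≤ phik k t - c := by rw [hc]; linarith
    positivity
  -- the comparison function and its derivatives
  have key : ∀ t, s ≤ t →
      0 ≤ y₁ t - s ^ (k/2) * (t ^ (k/2) * Real.sinh (lam * (phik k t - c))) / lam := by
    refine compA (s := s) (Q := lam^2) (q := fun τ => lam^2 * τ ^ (-(2*k)))
      (v := fun τ => y₁ τ - s ^ (k/2) * (τ ^ (k/2) * Real.sinh (lam * (phik k τ - c))) / lam)
      (v' := fun τ => deriv y₁ τ - s ^ (k/2) * (k/2 * τ ^ (k/2 - 1) * Real.sinh (lam * (phik k τ - c))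
        + lam * τ ^ (-(k/2)) * Real.cosh (lam * (phik k τ - c))) / lam)
      (v'' := fun τ => deriv (deriv y₁) τ - s ^ (k/2) * (lam^2 * τ ^ (-(2*k)) * (τ ^ (k/2) * Real.sinh (lam * (phik k τ - c)))
        + k/2 * (k/2 - 1) * τ ^ (k/2 - 2) * Real.sinh (lam * (phik k τ - c))) / lam)
      (sq_nonneg lam) ?_ ?_ ?_ ?_ ?_ ?_ ?_
    · intro t ht
      have ht0 : (0:ℝ) < t := lt_of_lt_of_le hs0 ht
      have : (0:ℝ) ≤ t ^ (-(2*k)) := Real.rpow_nonneg ht0.le _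
      positivity
    · intro t ht
      have h1 : t ^ (-(2*k)) ≤ 1 :=
        Real.rpow_le_one_of_one_le_of_nonpos (hs.trans ht) (by linarith)
      calc lam^2 * t ^ (-(2*k)) ≤ lam^2 * 1 :=
            mul_le_mul_of_nonneg_left h1 (sq_nonneg lam)
        _ = lam^2 := mul_one _
    · intro t ht
      have ht0 : (0:ℝ) < t := lt_of_lt_of_le hs0 ht
      exact (hyd t ht).hasDerivAt.sub (((hG hk1 ht0).const_mul (s ^ (k/2))).div_const lam)
    · intro t ht
      have ht0 : (0:ℝ) < t := lt_of_lt_of_le hs0 ht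
      exact (hyd2 t ht).hasDerivAt.sub (((hG1 hk1 ht0).const_mul (s ^ (k/2))).div_const lam)
    · intro t ht
      have ht0 : (0:ℝ) < t := lt_of_lt_of_le hs0 ht
      beta_reduce
      rw [hode t ht]
      have hD : k/2 * (k/2 - 1) * t ^ (k/2 - 2) * Real.sinh (lam * (phik k t - c)) ≤ 0 := by
        have hfac : k/2 * (k/2 - 1) ≤ 0 := by nlinarith
        have h1 : (0:ℝ) ≤ t ^ (k/2 - 2) := Real.rpow_nonneg ht0.le _
        have h2 := hSnn t ht
        nlinarith [mul_nonneg h1 h2]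
      have hCpos : (0:ℝ) ≤ s ^ (k/2) := Real.rpow_nonneg hs0.le _
      have hstep : 0 ≤ (s ^ (k/2) * -(k/2 * (k/2 - 1) * t ^ (k/2 - 2) * Real.sinh (lam * (phik k t - c)))) / lam :=
        div_nonneg (mul_nonneg hCpos (neg_nonneg.mpr hD)) hlam.le
      have heq : lam ^ 2 * t ^ (-(2 * k)) * y₁ t -
            s ^ (k / 2) * (lam ^ 2 * t ^ (-(2 * k)) * (t ^ (k / 2) * Real.sinh (lam * (phik k t - c))) +
              k / 2 * (k / 2 - 1) * t ^ (k / 2 - 2) * Real.sinh (lam * (phik k t - c))) / lam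
          - lam ^ 2 * t ^ (-(2 * k)) * (y₁ t - s ^ (k / 2) * (t ^ (k / 2) * Real.sinh (lam * (phik k t - c))) / lam)
          = s ^ (k / 2) * -(k / 2 * (k / 2 - 1) * t ^ (k / 2 - 2) * Real.sinh (lam * (phik k t - c))) / lam := by
        field_simp
        ring
      linarith [hstep, heq]
    · simp [hy0, hc]
    · beta_reduce
      rw [hy0']
      have hc0 : lam * (phik k s - c) = 0 := by rw [hc]; ring
      rw [hc0]
      simp only [Real.sinh_zero, Real.cosh_zero, mul_zero, zero_mul, mul_one, zero_add]
      have hC1 : s ^ (k/2) * s ^ (-(k/2)) = 1 := by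
        rw [← Real.rpow_add hs0]; simp
      rw [show s ^ (k/2) * (lam * s ^ (-(k/2))) / lam = s ^ (k/2) * s ^ (-(k/2)) * (lam / lam) by ring,
        div_self hlamne, mul_one, hC1, sub_self]
  intro t ht
  have ht0 : (0:ℝ) < t := lt_of_lt_of_le hs0 ht
  have hvt := key t ht
  rw [Real.mul_rpow hs0.le ht0.le, mul_assoc]
  linarith [hvt]
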